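/- (Relation between He^ε and tHe^ε.) For every ε ∈ [0,1), tHe^ε(X|Y) − 1 ≤ He^ε(X|Y) ≤ (1/(1−ε))·tHe^ε(X|Y). More precisely, for every subset A ⊆ 𝒳×𝒴 with P_{XY}(A) ≥ 1−ε one has Σ_{(x,y)∈A} P_{XY}(x,y) log(1/P_{X|Y}(x|y)) − 1 ≤ P_{XY}(A)·H_A(X|Y) ≤ (1/P_{XY}(A))·Σ_{(x,y)∈A} P_{XY}(x,y) log(1/P_{X|Y}(x|y)). -/

import Mathlib

open Filter Topology

noncomputable section

/-- A joint probability mass function on `X × Y` (all information quantities are base 2),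
with everywhere-positive marginals. -/
structure JointPMF (X Y : Type) where
  p : X → Y → ℝ
  nonneg : ∀ x y, 0 ≤ p x y
  hasSum_one : HasSum (fun z : X × Y => p z.1 z.2) 1
  margX_pos : ∀ x, 0 < ∑' y, p x y
  margY_pos : ∀ y, 0 < ∑' x, p x y

namespace JointPMF

variable {X Y : Type}

/-- marginal `P_X` -/
def pX (P : JointPMF X Y) (x : X) : ℝ := ∑' y, P.p x y

/-- marginal `P_Y` -/
def pY (P : JointPMF X Y) (y : Y) : ℝ := ∑' x, P.p x y

/-- conditional probability `P_{X|Y}(x|y)` -/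
def condXY (P : JointPMF X Y) (x : X) (y : Y) : ℝ := P.p x y / P.pY y

/-- conditional probability `P_{Y|X}(y|x)` -/
def condYX (P : JointPMF X Y) (x : X) (y : Y) : ℝ := P.p x y / P.pX x

/-- probability of a set of pairs -/
def prob (P : JointPMF X Y) (A : Set (X × Y)) : ℝ :=
  ∑' z : X × Y, A.indicator (fun z => P.p z.1 z.2) z

/-- probability of a set of `x`'s under the marginal `P_X` -/
def probX (P : JointPMF X Y) (A : Set X) : ℝ :=
  ∑' x : X, A.indicator (fun x => P.pX x) x

/-- conditional self-information `log₂(1/P_{X|Y}(x|y))` -/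
def iXY (P : JointPMF X Y) (x : X) (y : Y) : ℝ := Real.logb 2 (1 / P.condXY x y)

/-- `Q^A(x,y) = P_{XY}(x,y)·1[(x,y)∈A]/P_{XY}(A)` -/
def QA (P : JointPMF X Y) (A : Set (X × Y)) (z : X × Y) : ℝ :=
  A.indicator (fun z => P.p z.1 z.2) z / P.prob A

/-- `Q^A_Y(y) = Σ_x Q^A(x,y)` -/
def QAY (P : JointPMF X Y) (A : Set (X × Y)) (y : Y) : ℝ := ∑' x, P.QA A (x, y)

/-- `H_A(X|Y) = Σ_{(x,y)∈A} Q^A(x,y) log₂(Q^A_Y(y)/Q^A(x,y))` -/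
def HA (P : JointPMF X Y) (A : Set (X × Y)) : ℝ :=
  ∑' z : X × Y, A.indicator (fun z => P.QA A z * Real.logb 2 (P.QAY A z.2 / P.QA A z)) z

/-- `He^ε(X|Y)`: infimum of `P(A)·H_A(X|Y)` over `A` with `P(A) ≥ 1−ε`. -/
def He (P : JointPMF X Y) (ε : ℝ) : ℝ :=
  sInf {v : ℝ | ∃ A : Set (X × Y), 1 - ε ≤ P.prob A ∧ v = P.prob A * P.HA A}

/-- `Σ_{(x,y)∈A} P_{XY}(x,y) log₂(1/P_{X|Y}(x|y))` -/
def infoSum (P : JointPMF X Y) (A : Set (X × Y)) : ℝ :=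
  ∑' z : X × Y, A.indicator (fun z => P.p z.1 z.2 * P.iXY z.1 z.2) z

/-- `tHe^ε(X|Y)` -/
def tHe (P : JointPMF X Y) (ε : ℝ) : ℝ :=
  sInf {v : ℝ | ∃ A : Set (X × Y), 1 - ε ≤ P.prob A ∧ v = P.infoSum A}

/-- Shannon conditional entropy `H(X|Y)` -/
def condEnt (P : JointPMF X Y) : ℝ :=
  ∑' z : X × Y, P.p z.1 z.2 * P.iXY z.1 z.2

/-- `Pr{ log₂(1/P_{X|Y}(x|Y)) > R | X = x }` -/
def tailProb (P : JointPMF X Y) (x : X) (R : ℝ) : ℝ :=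
  ∑' y : Y, {y : Y | R < P.iXY x y}.indicator (fun y => P.condYX x y) y

/-- `h̄^ε(x)` (real-valued version) -/
def hbar (P : JointPMF X Y) (ε : ℝ) (x : X) : ℝ :=
  sInf {R : ℝ | P.tailProb x R ≤ ε}

/-- `h̄^ε(x)` (extended-real-valued version) -/
def hbarE (P : JointPMF X Y) (ε : ℝ) (x : X) : EReal :=
  sInf {R : EReal | ∃ r : ℝ, R = (r : EReal) ∧ P.tailProb x r ≤ ε}

/-- `H̄_s^ε(X|Y) = Σ_x P_X(x)·h̄^ε(x)` -/
def HsEps (P : JointPMF X Y) (ε : ℝ) : ℝ := ∑' x, P.pX x * P.hbar ε x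

end JointPMF

/-- Partial sum `Σ_{i<k} P(e i) log₂(1/P_{X|Y}(e i))` along an enumeration `e`. -/
def hHeSum {X Y : Type} (P : JointPMF X Y) (e : ℕ → X × Y) (k : ℕ) : ℝ :=
  ∑ i ∈ Finset.range k, P.p (e i).1 (e i).2 * P.iXY (e i).1 (e i).2

/-- A variable-length code with common side-information: for each `y` the set of codewords
`{enc x y : x}` satisfies the prefix condition (no codeword is a proper prefix of another). -/
structure CSICode (X Y : Type) where
  enc : X → Y → List Bool
  dec : List Bool → Y → X
  prefixFree : ∀ (y : Y) (x x' : X), (enc x y) <+: (enc x' y) → enc x y = enc x' y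

namespace CSICode

variable {X Y : Type}

/-- error probability `Pr{ψ(φ(X|Y),Y) ≠ X}` -/
def err (C : CSICode X Y) (P : JointPMF X Y) : ℝ :=
  P.prob {z | C.dec (C.enc z.1 z.2) z.2 ≠ z.1}

/-- average codeword length `E[ℓ(X|Y)]` -/
def avgLen (C : CSICode X Y) (P : JointPMF X Y) : ℝ :=
  ∑' z : X × Y, P.p z.1 z.2 * ((C.enc z.1 z.2).length : ℝ)

end CSICode

/-- A Slepian-Wolf code: prefix-free encoder of `x` alone, decoder with side information. -/
structure SWCode (X Y : Type) where
  enc : X → List Bool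
  dec : List Bool → Y → X
  prefixFree : ∀ x x', (enc x) <+: (enc x') → enc x = enc x'

namespace SWCode

variable {X Y : Type}

/-- error probability `Pr{ψ(φ(X),Y) ≠ X}` -/
def err (C : SWCode X Y) (P : JointPMF X Y) : ℝ :=
  P.prob {z | C.dec (C.enc z.1) z.2 ≠ z.1}

/-- codeword length `ℓ(x)` -/
def len (C : SWCode X Y) (x : X) : ℕ := (C.enc x).length

/-- average codeword length `E[ℓ(X)]` -/
def avgLen (C : SWCode X Y) (P : JointPMF X Y) : ℝ :=
  ∑' x : X, P.pX x * ((C.enc x).length : ℝ)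

end SWCode

/-- A general correlated source: for each blocklength `n`, a joint pmf on `𝒳ⁿ × 𝒴ⁿ`. -/
abbrev Source (X Y : Type) : Type := (n : ℕ) → JointPMF (Fin n → X) (Fin n → Y)

section Sources

variable {X Y : Type}

/-- normalized conditional self-information `Zₙ = (1/n) log₂(1/P_{Xⁿ|Yⁿ})` -/
def nInfo (S : Source X Y) (n : ℕ) (z : (Fin n → X) × (Fin n → Y)) : ℝ :=
  (1/(n:ℝ)) * (S n).iXY z.1 z.2

/-- uniform integrability: `lim_{u→∞} sup_n E[Zₙ·1{Zₙ ≥ u}] = 0` -/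
def UniformlyIntegrable (S : Source X Y) : Prop :=
  ∀ δ > (0:ℝ), ∃ u₀ : ℝ, ∀ u ≥ u₀, ∀ n : ℕ,
    (∑' z : (Fin n → X) × (Fin n → Y),
      {z | u ≤ nInfo S n z}.indicator (fun z => (S n).p z.1 z.2 * nInfo S n z) z) ≤ δ

/-- spectral conditional sup-entropy rate `H̄(X|Y) = p-limsup Zₙ` -/
def specCondSup (S : Source X Y) : ℝ :=
  sInf {α : ℝ | Tendsto (fun n : ℕ => (S n).prob {z | α < nInfo S n z}) atTop (𝓝 0)}

/-- spectral conditional inf-entropy rate `H̲(X|Y) = p-liminf Zₙ` -/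
def specCondInf (S : Source X Y) : ℝ :=
  sSup {β : ℝ | Tendsto (fun n : ℕ => (S n).prob {z | nInfo S n z < β}) atTop (𝓝 0)}

/-- spectral inf-divergence rate `D̲(X₁‖X₂)` between the marginal processes -/
def specInfDiv (S1 S2 : Source X Y) : ℝ :=
  sSup {β : ℝ | Tendsto (fun n : ℕ =>
    (S1 n).probX {x | (1/(n:ℝ)) * Real.logb 2 ((S1 n).pX x / (S2 n).pX x) < β})
    atTop (𝓝 0)}

/-- optimal rate achievable by ε-coding with common side-information -/
def RcomEps (S : Source X Y) (ε : ℝ) : ℝ :=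
  sInf {R : ℝ | ∃ C : (n : ℕ) → CSICode (Fin n → X) (Fin n → Y),
    limsup (fun n : ℕ => (C n).err (S n)) atTop ≤ ε ∧
    limsup (fun n : ℕ => (1/(n:ℝ)) * (C n).avgLen (S n)) atTop ≤ R}

/-- optimal rate achievable by ε-Slepian-Wolf coding -/
def RSWeps (S : Source X Y) (ε : ℝ) : ℝ :=
  sInf {R : ℝ | ∃ C : (n : ℕ) → SWCode (Fin n → X) (Fin n → Y),
    limsup (fun n : ℕ => (C n).err (S n)) atTop ≤ ε ∧
    limsup (fun n : ℕ => (1/(n:ℝ)) * (C n).avgLen (S n)) atTop ≤ R}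

/-- optimal rate achievable by weakly lossless Slepian-Wolf coding -/
def RSW (S : Source X Y) : ℝ :=
  sInf {R : ℝ | ∃ C : (n : ℕ) → SWCode (Fin n → X) (Fin n → Y),
    Tendsto (fun n : ℕ => (C n).err (S n)) atTop (𝓝 0) ∧
    limsup (fun n : ℕ => (1/(n:ℝ)) * (C n).avgLen (S n)) atTop ≤ R}

/-- `H̄_s(X|Y) = lim_{ε↓0} limsup_n (1/n) H̄_s^ε(Xⁿ|Yⁿ)`. Since the inner quantity is
nonincreasing in `ε`, the right limit at `0` equals the supremum over `ε > 0`. -/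
def Hs (S : Source X Y) : ℝ :=
  ⨆ ε ∈ Set.Ioi (0:ℝ), limsup (fun n : ℕ => (1/(n:ℝ)) * (S n).HsEps ε) atTop

/-- `(X,Y)` is the mixture of `(X₁,Y₁)` and `(X₂,Y₂)` with weights `α₁, α₂`. -/
def IsMixture2 (S S1 S2 : Source X Y) (α1 α2 : ℝ) : Prop :=
  ∀ n x y, (S n).p x y = α1 * (S1 n).p x y + α2 * (S2 n).p x y

end Sources

section Aux

variable {X Y : Type}

/-- auxiliary functions -/
def ffn (P : JointPMF X Y) (A : Set (X × Y)) : X × Y → ℝ :=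
  A.indicator (fun z => P.p z.1 z.2)

def PAy (P : JointPMF X Y) (A : Set (X × Y)) (y : Y) : ℝ := ∑' x, ffn P A (x, y)

def gfn (P : JointPMF X Y) (A : Set (X × Y)) : X × Y → ℝ :=
  A.indicator (fun z => P.p z.1 z.2 * P.iXY z.1 z.2)

def hfn (P : JointPMF X Y) (A : Set (X × Y)) : X × Y → ℝ :=
  A.indicator (fun z => P.QA A z * Real.logb 2 (P.QAY A z.2 / P.QA A z))

def dfn (P : JointPMF X Y) (A : Set (X × Y)) : X × Y → ℝ :=
  A.indicator (fun z => P.p z.1 z.2 * Real.logb 2 (P.pY z.2 / PAy P A z.2))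

def DyF (P : JointPMF X Y) (A : Set (X × Y)) (y : Y) : ℝ :=
  PAy P A y * Real.logb 2 (P.pY y / PAy P A y)

lemma summable_pf (P : JointPMF X Y) : Summable (fun z : X × Y => P.p z.1 z.2) :=
  P.hasSum_one.summable

lemma prob_eq (P : JointPMF X Y) (A : Set (X × Y)) : P.prob A = ∑' z, ffn P A z := rfl
lemma infoSum_eq (P : JointPMF X Y) (A : Set (X × Y)) : P.infoSum A = ∑' z, gfn P A z := rfl
lemma HA_eq (P : JointPMF X Y) (A : Set (X × Y)) : P.HA A = ∑' z, hfn P A z := rfl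

lemma summable_ff (P : JointPMF X Y) (A : Set (X × Y)) : Summable (ffn P A) :=
  (summable_pf P).indicator A

lemma ff_nonneg (P : JointPMF X Y) (A : Set (X × Y)) (z : X × Y) : 0 ≤ ffn P A z :=
  Set.indicator_nonneg (fun z _ => P.nonneg z.1 z.2) z

lemma ff_le_pf (P : JointPMF X Y) (A : Set (X × Y)) (z : X × Y) : ffn P A z ≤ P.p z.1 z.2 :=
  Set.indicator_le_self' (fun z _ => P.nonneg z.1 z.2) z

lemma summable_pf_fiber (P : JointPMF X Y) (y : Y) : Summable (fun x => P.p x y) :=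
  (summable_pf P).comp_injective (i := fun x => ((x, y) : X × Y))
    (fun a b hab => by simpa using congrArg Prod.fst hab)

lemma summable_ff_fiber (P : JointPMF X Y) (A : Set (X × Y)) (y : Y) :
    Summable (fun x => ffn P A (x, y)) :=
  (summable_ff P A).comp_injective (i := fun x => ((x, y) : X × Y))
    (fun a b hab => by simpa using congrArg Prod.fst hab)

lemma PAy_nonneg (P : JointPMF X Y) (A : Set (X × Y)) (y : Y) : 0 ≤ PAy P A y :=
  tsum_nonneg (fun x => ff_nonneg P A _)

lemma PAy_le_pY (P : JointPMF X Y) (A : Set (X × Y)) (y : Y) : PAy P A y ≤ P.pY y :=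
  Summable.tsum_le_tsum (fun x => ff_le_pf P A (x, y)) (summable_ff_fiber P A y) (summable_pf_fiber P y)

lemma ff_le_PAy (P : JointPMF X Y) (A : Set (X × Y)) (z : X × Y) : ffn P A z ≤ PAy P A z.2 := by
  obtain ⟨x, y⟩ := z
  exact Summable.le_tsum (summable_ff_fiber P A y) x (fun j _ => ff_nonneg P A _)

lemma pf_le_pY (P : JointPMF X Y) (z : X × Y) : P.p z.1 z.2 ≤ P.pY z.2 := by
  obtain ⟨x, y⟩ := z
  exact Summable.le_tsum (summable_pf_fiber P y) x (fun j _ => P.nonneg j y)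

end Aux

section Aux2
variable {X Y : Type}

lemma pY_hasSum (P : JointPMF X Y) : HasSum P.pY 1 := by
  have hsw : Summable (fun w : Y × X => P.p w.swap.1 w.swap.2) := (summable_pf P).prod_symm
  have hsum : Summable (fun y => ∑' x, P.p x y) :=
    ((summable_prod_of_nonneg (fun w => P.nonneg w.2 w.1)).mp hsw).2
  have h1 : ∑' w : Y × X, P.p w.swap.1 w.swap.2 = 1 :=
    ((Equiv.prodComm Y X).tsum_eq (fun z : X × Y => P.p z.1 z.2)).trans P.hasSum_one.tsum_eq
  have h2 : ∑' w : Y × X, P.p w.swap.1 w.swap.2 = ∑' y, ∑' x, P.p x y := Summable.tsum_prod hsw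
  have h3 : ∑' y, P.pY y = 1 := by rw [← h1, h2]; rfl
  have := hsum.hasSum
  rwa [show (∑' y, ∑' x, P.p x y) = 1 from h3] at this

lemma PAy_hasSum (P : JointPMF X Y) (A : Set (X × Y)) : HasSum (PAy P A) (P.prob A) := by
  have hsw : Summable (fun w : Y × X => ffn P A w.swap) := (summable_ff P A).prod_symm
  have hsum : Summable (fun y => ∑' x, ffn P A (x, y)) :=
    ((summable_prod_of_nonneg (fun w => ff_nonneg P A _)).mp hsw).2
  have h1 : ∑' w : Y × X, ffn P A w.swap = P.prob A :=
    ((Equiv.prodComm Y X).tsum_eq (ffn P A)).trans rfl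
  have h2 : ∑' w : Y × X, ffn P A w.swap = ∑' y, ∑' x, ffn P A (x, y) := Summable.tsum_prod hsw
  have h3 : ∑' y, PAy P A y = P.prob A := by rw [← h1, h2]; rfl
  have := hsum.hasSum
  rwa [show (∑' y, ∑' x, ffn P A (x, y)) = P.prob A from h3] at this

lemma QA_eq (P : JointPMF X Y) (A : Set (X × Y)) (z : X × Y) :
    P.QA A z = ffn P A z / P.prob A := rfl

lemma QAY_eq (P : JointPMF X Y) (A : Set (X × Y)) (y : Y) :
    P.QAY A y = PAy P A y / P.prob A := by
  show (∑' x, ffn P A (x, y) / P.prob A) = PAy P A y / P.prob A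
  simp only [div_eq_mul_inv]
  rw [tsum_mul_right]
  rfl

lemma prob_nonneg' (P : JointPMF X Y) (A : Set (X × Y)) : 0 ≤ P.prob A :=
  tsum_nonneg (fun z => ff_nonneg P A z)

lemma prob_le_one' (P : JointPMF X Y) (A : Set (X × Y)) : P.prob A ≤ 1 := by
  have := Summable.tsum_le_tsum (fun z => ff_le_pf P A z) (summable_ff P A) (summable_pf P)
  rw [P.hasSum_one.tsum_eq] at this
  exact this

lemma prob_univ' (P : JointPMF X Y) : P.prob Set.univ = 1 := by
  rw [prob_eq]
  show (∑' z, Set.univ.indicator (fun z : X × Y => P.p z.1 z.2) z) = 1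
  rw [Set.indicator_univ]
  exact P.hasSum_one.tsum_eq

end Aux2

section Aux3
variable {X Y : Type}

lemma hf_nonneg (P : JointPMF X Y) (A : Set (X × Y)) (hpos : 0 < P.prob A) (z : X × Y) :
    0 ≤ hfn P A z := by
  refine Set.indicator_nonneg (fun z hz => ?_) z
  by_cases hQ : P.QA A z = 0
  · simp [hQ]
  · have hQ0 : 0 ≤ P.QA A z := by
      rw [QA_eq]; exact div_nonneg (ff_nonneg P A z) hpos.le
    have hQpos : 0 < P.QA A z := lt_of_le_of_ne hQ0 (Ne.symm hQ)
    refine mul_nonneg hQpos.le (Real.logb_nonneg one_lt_two ?_)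
    rw [le_div_iff₀ hQpos, one_mul, QA_eq, QAY_eq]
    gcongr
    exact ff_le_PAy P A z

lemma gf_nonneg (P : JointPMF X Y) (A : Set (X × Y)) (z : X × Y) : 0 ≤ gfn P A z := by
  refine Set.indicator_nonneg (fun z hz => ?_) z
  by_cases hz0 : P.p z.1 z.2 = 0
  · simp [hz0]
  · have hz0' : 0 < P.p z.1 z.2 := lt_of_le_of_ne (P.nonneg _ _) (Ne.symm hz0)
    refine mul_nonneg hz0'.le ?_
    rw [JointPMF.iXY, JointPMF.condXY, one_div_div]
    exact Real.logb_nonneg one_lt_two ((le_div_iff₀ hz0').mpr (by rw [one_mul]; exact pf_le_pY P z))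

lemma df_nonneg (P : JointPMF X Y) (A : Set (X × Y)) (z : X × Y) : 0 ≤ dfn P A z := by
  refine Set.indicator_nonneg (fun z hz => ?_) z
  by_cases hz0 : P.p z.1 z.2 = 0
  · simp [hz0]
  · have hz0' : 0 < P.p z.1 z.2 := lt_of_le_of_ne (P.nonneg _ _) (Ne.symm hz0)
    have hPA : 0 < PAy P A z.2 := by
      have := ff_le_PAy P A z
      rw [show ffn P A z = P.p z.1 z.2 from Set.indicator_of_mem hz _] at this
      linarith
    refine mul_nonneg hz0'.le (Real.logb_nonneg one_lt_two ?_)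
    rw [le_div_iff₀ hPA, one_mul]
    exact PAy_le_pY P A z.2

lemma mul_hf_eq (P : JointPMF X Y) (A : Set (X × Y)) (hpos : 0 < P.prob A) (z : X × Y) :
    P.prob A * hfn P A z = A.indicator
      (fun z => P.p z.1 z.2 * Real.logb 2 (PAy P A z.2 / P.p z.1 z.2)) z := by
  by_cases hz : z ∈ A
  · rw [hfn, Set.indicator_of_mem hz, Set.indicator_of_mem hz]
    have hQA : P.QA A z = P.p z.1 z.2 / P.prob A := by
      rw [QA_eq, ffn, Set.indicator_of_mem hz]
    by_cases hz0 : P.p z.1 z.2 = 0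
    · simp [hQA, hz0]
    · rw [hQA, QAY_eq]
      have h1 : PAy P A z.2 / P.prob A / (P.p z.1 z.2 / P.prob A)
          = PAy P A z.2 / P.p z.1 z.2 := by
        rw [div_div_div_eq, mul_comm (PAy P A z.2) (P.prob A),
          mul_div_mul_left _ _ hpos.ne']
      rw [h1]
      field_simp
  · rw [hfn, Set.indicator_of_notMem hz, Set.indicator_of_notMem hz, mul_zero]

lemma gf_eq_add (P : JointPMF X Y) (A : Set (X × Y)) (z : X × Y) :
    gfn P A z = A.indicator
      (fun z => P.p z.1 z.2 * Real.logb 2 (PAy P A z.2 / P.p z.1 z.2)) z + dfn P A z := by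
  by_cases hz : z ∈ A
  · rw [gfn, dfn, Set.indicator_of_mem hz, Set.indicator_of_mem hz, Set.indicator_of_mem hz]
    by_cases hz0 : P.p z.1 z.2 = 0
    · simp [hz0]
    · have hp : 0 < P.p z.1 z.2 := lt_of_le_of_ne (P.nonneg _ _) (Ne.symm hz0)
      have hPA : 0 < PAy P A z.2 := by
        have := ff_le_PAy P A z
        rw [show ffn P A z = P.p z.1 z.2 from Set.indicator_of_mem hz _] at this
        linarith
      have hpY : 0 < P.pY z.2 := P.margY_pos z.2
      rw [JointPMF.iXY, JointPMF.condXY, one_div_div, ← mul_add]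
      congr 1
      rw [← Real.logb_mul (ne_of_gt (div_pos hPA hp)) (ne_of_gt (div_pos hpY hPA))]
      congr 1
      field_simp
  · rw [gfn, dfn, Set.indicator_of_notMem hz, Set.indicator_of_notMem hz,
      Set.indicator_of_notMem hz, add_zero]

end Aux3

section Aux4
variable {X Y : Type}

lemma df_fiber (P : JointPMF X Y) (A : Set (X × Y)) (y : Y) :
    HasSum (fun x => dfn P A (x, y)) (DyF P A y) := by
  have hfun : (fun x => dfn P A (x, y))
      = fun x => ffn P A (x, y) * Real.logb 2 (P.pY y / PAy P A y) := by
    funext x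
    by_cases hm : ((x, y) : X × Y) ∈ A
    · rw [dfn, Set.indicator_of_mem hm, ffn, Set.indicator_of_mem hm]
    · rw [dfn, Set.indicator_of_notMem hm, ffn, Set.indicator_of_notMem hm, zero_mul]
  rw [hfun]
  exact (summable_ff_fiber P A y).hasSum.mul_right _

lemma Dy_nonneg (P : JointPMF X Y) (A : Set (X × Y)) (y : Y) : 0 ≤ DyF P A y := by
  rcases eq_or_lt_of_le (PAy_nonneg P A y) with h | h
  · simp [DyF, ← h]
  · refine mul_nonneg (PAy_nonneg P A y) (Real.logb_nonneg one_lt_two ?_)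
    rw [le_div_iff₀ h, one_mul]
    exact PAy_le_pY P A y

lemma real_core {s a b : ℝ} (hs : 0 < s) (hb : 0 < b) (ha : 0 ≤ a) :
    a * Real.logb 2 (b / a) ≤ (2 / Real.log 2) * (a / (2 * s) + s * b / 2 - a) := by
  have hlog : 0 < Real.log 2 := Real.log_pos one_lt_two
  rcases eq_or_lt_of_le ha with h0 | hpa
  · rw [← h0]
    simp only [zero_mul, zero_div, add_zero, sub_zero, zero_add, zero_mul]
    positivity
  · have ht : 0 < b / a := div_pos hb hpa
    have key1 : Real.log (b / a) ≤ 2 * (Real.sqrt (b / a) - 1) := by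
      have h1 := Real.log_le_sub_one_of_pos (Real.sqrt_pos.mpr ht)
      have h2 : Real.log (b / a) = 2 * Real.log (Real.sqrt (b / a)) := by
        rw [Real.log_sqrt ht.le]; ring
      linarith
    have key2 : a * Real.sqrt (b / a) = Real.sqrt (a * b) := by
      rw [← Real.sqrt_sq hpa.le, ← Real.sqrt_mul (sq_nonneg a)]
      congr 1
      rw [Real.sqrt_sq hpa.le]
      field_simp
    have key3 : Real.sqrt (a * b) ≤ a / (2 * s) + s * b / 2 := by
      have he : a * b = (a / s) * (s * b) := by field_simp
      rw [he, Real.sqrt_mul (by positivity)]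
      have h1 := Real.sq_sqrt (show (0:ℝ) ≤ a / s by positivity)
      have h2 := Real.sq_sqrt (show (0:ℝ) ≤ s * b by positivity)
      have k : Real.sqrt (a / s) * Real.sqrt (s * b) ≤ (a / s + s * b) / 2 := by
        nlinarith [sq_nonneg (Real.sqrt (a / s) - Real.sqrt (s * b)),
          Real.sqrt_nonneg (a / s), Real.sqrt_nonneg (s * b)]
      have k2 : a / (2 * s) + s * b / 2 = (a / s + s * b) / 2 := by
        field_simp
      linarith
    have step : a * Real.log (b / a) ≤ 2 * (Real.sqrt (a * b) - a) := by
      have e1 : a * Real.log (b / a) ≤ a * (2 * (Real.sqrt (b / a) - 1)) :=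
        mul_le_mul_of_nonneg_left key1 hpa.le
      have e2 : a * (2 * (Real.sqrt (b / a) - 1)) = 2 * (Real.sqrt (a * b) - a) := by
        rw [← key2]; ring
      linarith
    have h5 : a * Real.log (b / a) ≤ 2 * (a / (2 * s) + s * b / 2 - a) := by linarith
    calc a * Real.logb 2 (b / a) = a * (Real.log (b / a) / Real.log 2) := by rw [Real.logb]
      _ = (a * Real.log (b / a)) / Real.log 2 := by ring
      _ ≤ (2 * (a / (2 * s) + s * b / 2 - a)) / Real.log 2 := by gcongr
      _ = (2 / Real.log 2) * (a / (2 * s) + s * b / 2 - a) := by ring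

lemma Dy_le (P : JointPMF X Y) (A : Set (X × Y)) (hpos : 0 < P.prob A) (y : Y) :
    DyF P A y ≤ (2 / Real.log 2) *
      (PAy P A y / (2 * Real.sqrt (P.prob A)) + Real.sqrt (P.prob A) * P.pY y / 2
        - PAy P A y) := by
  rw [DyF]
  exact real_core (Real.sqrt_pos.mpr hpos) (P.margY_pos y) (PAy_nonneg P A y)

lemma B_hasSum (P : JointPMF X Y) (A : Set (X × Y)) :
    HasSum (fun y => (2 / Real.log 2) *
      (PAy P A y / (2 * Real.sqrt (P.prob A)) + Real.sqrt (P.prob A) * P.pY y / 2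
        - PAy P A y))
      ((2 / Real.log 2) * (P.prob A / (2 * Real.sqrt (P.prob A))
        + Real.sqrt (P.prob A) * 1 / 2 - P.prob A)) := by
  have h1 := (PAy_hasSum P A).div_const (2 * Real.sqrt (P.prob A))
  have h2 := ((pY_hasSum P).mul_left (Real.sqrt (P.prob A))).div_const 2
  exact ((h1.add h2).sub (PAy_hasSum P A)).mul_left _

lemma Dy_summable (P : JointPMF X Y) (A : Set (X × Y)) (hpos : 0 < P.prob A) :
    Summable (DyF P A) :=
  Summable.of_nonneg_of_le (Dy_nonneg P A) (Dy_le P A hpos) (B_hasSum P A).summable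

lemma df_summable (P : JointPMF X Y) (A : Set (X × Y)) (hpos : 0 < P.prob A) :
    Summable (dfn P A) := by
  refine (Equiv.prodComm Y X).summable_iff.mp ?_
  have hnn : 0 ≤ fun w : Y × X => dfn P A ((Equiv.prodComm Y X) w) :=
    fun w => df_nonneg P A _
  refine (summable_prod_of_nonneg hnn).mpr ⟨fun y => (df_fiber P A y).summable, ?_⟩
  have : (fun y => ∑' x, dfn P A ((Equiv.prodComm Y X) (y, x))) = DyF P A :=
    funext fun y => (df_fiber P A y).tsum_eq
  rw [this]
  exact Dy_summable P A hpos

lemma df_tsum_le_one (P : JointPMF X Y) (A : Set (X × Y)) (hpos : 0 < P.prob A)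
    (hle1 : P.prob A ≤ 1) : ∑' z, dfn P A z ≤ 1 := by
  set s := Real.sqrt (P.prob A) with hs_def
  have hs : 0 < s := Real.sqrt_pos.mpr hpos
  have hlog : 0 < Real.log 2 := Real.log_pos one_lt_two
  have hsw : Summable (fun w : Y × X => dfn P A w.swap) := (df_summable P A hpos).prod_symm
  have ht1 : ∑' z, dfn P A z = ∑' y, DyF P A y := by
    rw [← (Equiv.prodComm Y X).tsum_eq (dfn P A)]
    exact (Summable.tsum_prod hsw).trans (tsum_congr fun y => (df_fiber P A y).tsum_eq)
  have ht2 : ∑' y, DyF P A y ≤ (2 / Real.log 2) * (P.prob A / (2 * s) + s * 1 / 2 - P.prob A) := by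
    rw [← (B_hasSum P A).tsum_eq]
    exact Summable.tsum_le_tsum (Dy_le P A hpos) (Dy_summable P A hpos) (B_hasSum P A).summable
  have hs2 : s ^ 2 = P.prob A := Real.sq_sqrt hpos.le
  have hv : P.prob A / (2 * s) + s * 1 / 2 - P.prob A = s - s ^ 2 := by
    rw [← hs2]; field_simp; ring
  have hnum : (2 / Real.log 2) * (s - s ^ 2) ≤ 1 := by
    rw [div_mul_eq_mul_div, div_le_one hlog]
    nlinarith [Real.log_two_gt_d9, sq_nonneg (s - 1 / 2)]
  rw [ht1]
  rw [hv] at ht2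
  linarith

end Aux4

section Aux5
variable {X Y : Type}

lemma main_aux (P : JointPMF X Y) (A : Set (X × Y)) (hpos : 0 < P.prob A)
    (hle1 : P.prob A ≤ 1) :
    0 ≤ P.HA A ∧ 0 ≤ P.infoSum A ∧ P.infoSum A - 1 ≤ P.prob A * P.HA A ∧
      P.prob A * P.HA A ≤ P.infoSum A := by
  have hdf := df_summable P A hpos
  have key : ∀ z, gfn P A z = P.prob A * hfn P A z + dfn P A z := fun z => by
    rw [gf_eq_add, mul_hf_eq P A hpos]
  have hHAnn : 0 ≤ P.HA A := by
    rw [HA_eq]; exact tsum_nonneg (hf_nonneg P A hpos)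
  have hInn : 0 ≤ P.infoSum A := by
    rw [infoSum_eq]; exact tsum_nonneg (gf_nonneg P A)
  refine ⟨hHAnn, hInn, ?_⟩
  by_cases hs : Summable (hfn P A)
  · have hsa : Summable (fun z => P.prob A * hfn P A z) := hs.mul_left _
    have hgs : Summable (gfn P A) := by
      have he : gfn P A = fun z => P.prob A * hfn P A z + dfn P A z := funext key
      rw [he]; exact hsa.add hdf
    have e1 : P.infoSum A = P.prob A * P.HA A + ∑' z, dfn P A z := by
      rw [infoSum_eq, show gfn P A = fun z => P.prob A * hfn P A z + dfn P A z from funext key,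
        Summable.tsum_add hsa hdf, tsum_mul_left, HA_eq]
    have hd0 : 0 ≤ ∑' z, dfn P A z := tsum_nonneg (df_nonneg P A)
    have hd1 : ∑' z, dfn P A z ≤ 1 := df_tsum_le_one P A hpos hle1
    constructor <;> linarith
  · have hHA0 : P.HA A = 0 := by
      rw [HA_eq]; exact tsum_eq_zero_of_not_summable hs
    have hgns : ¬ Summable (gfn P A) := by
      intro hgs
      apply hs
      have h2 : (fun z => P.prob A * hfn P A z) = fun z => gfn P A z - dfn P A z :=
        funext fun z => by rw [key z]; ring
      have h3 : Summable (fun z => P.prob A * hfn P A z) := by rw [h2]; exact hgs.sub hdf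
      have h4 := h3.mul_left (P.prob A)⁻¹
      have h5 : (fun z => (P.prob A)⁻¹ * (P.prob A * hfn P A z)) = hfn P A :=
        funext fun z => by field_simp
      rwa [h5] at h4
    have hI0 : P.infoSum A = 0 := by
      rw [infoSum_eq]; exact tsum_eq_zero_of_not_summable hgns
    rw [hI0, hHA0, mul_zero]
    norm_num

end Aux5

/-- Relation between `He^ε` and `tHe^ε`. -/
theorem He_tHe_relation {X Y : Type} [Countable X] [Countable Y]
    (P : JointPMF X Y) (ε : ℝ) (hε : ε ∈ Set.Ico (0:ℝ) 1) :
    (P.tHe ε - 1 ≤ P.He ε ∧ P.He ε ≤ (1/(1-ε)) * P.tHe ε) ∧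
    (∀ A : Set (X × Y), 1 - ε ≤ P.prob A →
      P.infoSum A - 1 ≤ P.prob A * P.HA A ∧
      P.prob A * P.HA A ≤ (1 / P.prob A) * P.infoSum A) := by
  obtain ⟨hε0, hε1⟩ := hε
  have hone : (0:ℝ) < 1 - ε := by linarith
  have part2 : ∀ A : Set (X × Y), 1 - ε ≤ P.prob A →
      P.infoSum A - 1 ≤ P.prob A * P.HA A ∧
      P.prob A * P.HA A ≤ (1 / P.prob A) * P.infoSum A := by
    intro A hA
    have hpos : 0 < P.prob A := lt_of_lt_of_le hone hA
    have hle1 := prob_le_one' P A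
    obtain ⟨hHAnn, hInn, hlow, hup⟩ := main_aux P A hpos hle1
    refine ⟨hlow, hup.trans ?_⟩
    have h1 : (1:ℝ) ≤ 1 / P.prob A := by
      rw [le_div_iff₀ hpos, one_mul]; exact hle1
    nlinarith
  refine ⟨⟨?_, ?_⟩, part2⟩
  · -- tHe - 1 ≤ He
    have hne1 : {v : ℝ | ∃ A : Set (X × Y), 1 - ε ≤ P.prob A ∧ v = P.prob A * P.HA A}.Nonempty :=
      ⟨P.prob Set.univ * P.HA Set.univ, Set.univ, by rw [prob_univ']; constructor <;> [linarith; rfl]⟩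
    have hbd2 : BddBelow {v : ℝ | ∃ A : Set (X × Y), 1 - ε ≤ P.prob A ∧ v = P.infoSum A} := by
      refine ⟨0, ?_⟩
      rintro v ⟨A, hA, rfl⟩
      have hpos : 0 < P.prob A := lt_of_lt_of_le hone hA
      exact (main_aux P A hpos (prob_le_one' P A)).2.1
    refine le_csInf hne1 ?_
    rintro v ⟨A, hA, rfl⟩
    have hpos : 0 < P.prob A := lt_of_lt_of_le hone hA
    have htle : P.tHe ε ≤ P.infoSum A := csInf_le hbd2 ⟨A, hA, rfl⟩
    have := (part2 A hA).1
    linarith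
  · -- He ≤ (1/(1-ε)) * tHe
    have hne2 : {v : ℝ | ∃ A : Set (X × Y), 1 - ε ≤ P.prob A ∧ v = P.infoSum A}.Nonempty :=
      ⟨P.infoSum Set.univ, Set.univ, by rw [prob_univ']; constructor <;> [linarith; rfl]⟩
    have hbd1 : BddBelow {v : ℝ | ∃ A : Set (X × Y), 1 - ε ≤ P.prob A ∧ v = P.prob A * P.HA A} := by
      refine ⟨0, ?_⟩
      rintro v ⟨A, hA, rfl⟩
      have hpos : 0 < P.prob A := lt_of_lt_of_le hone hA
      obtain ⟨h1, _, _, _⟩ := main_aux P A hpos (prob_le_one' P A)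
      exact mul_nonneg hpos.le h1
    have hkey : (1 - ε) * P.He ε ≤ P.tHe ε := by
      refine le_csInf hne2 ?_
      rintro v ⟨A, hA, rfl⟩
      have hpos : 0 < P.prob A := lt_of_lt_of_le hone hA
      have hHe : P.He ε ≤ P.prob A * P.HA A := csInf_le hbd1 ⟨A, hA, rfl⟩
      have h2 := (part2 A hA).2
      have hInn : 0 ≤ P.infoSum A := (main_aux P A hpos (prob_le_one' P A)).2.1
      -- (1-ε) * He ≤ (1-ε) * (1/prob A) * infoSum ≤ infoSum
      have h3 : (1 - ε) * P.He ε ≤ (1 - ε) * ((1 / P.prob A) * P.infoSum A) := by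
        apply mul_le_mul_of_nonneg_left (hHe.trans h2) hone.le
      have h4 : (1 - ε) * ((1 / P.prob A) * P.infoSum A) ≤ P.infoSum A := by
        rw [show (1 - ε) * ((1 / P.prob A) * P.infoSum A)
            = ((1 - ε) / P.prob A) * P.infoSum A by ring]
        have h5 : (1 - ε) / P.prob A ≤ 1 := by
          rw [div_le_one hpos]; exact hA
        nlinarith
      linarith
    rw [show (1/(1-ε)) * P.tHe ε = P.tHe ε / (1 - ε) by ring, le_div_iff₀ hone]
    linarith [hkey]
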